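/- Let s ≥ 1, let A be the 2^s × 2^s complex matrix with A_{k,k−1} = 1 for 1 ≤ k ≤ 2^s−1, A_{0,2^s−1} = −1 and all other entries 0, and let u₀ = (1, 0, …, 0)ᵀ ∈ ℂ^{2^s}. Then for a vector u ∈ ℂ^{2^s}, the system {A^r u : r = 0, 1, …, 2^s−1} is orthonormal in ℂ^{2^s} if and only if u = B u₀ for some unitary matrix B with AB = BA. Moreover, a unitary matrix B satisfies AB = BA if and only if B = C · diag(γ₀, …, γ_{2^s−1}) · C^{-1} for some complex numbers γ_r with |γ_r| = 1, where C is the unitary matrix whose r-th column is the vector v_r with coordinates (v_r)_l = 2^{-s/2} (−1)^l e^{−iπ(2r+1)l/2^s}; and in that case the coordinates of u = B u₀ are u_k = 2^{-s} (−1)^k Σ_{r=0}^{2^s−1} γ_r e^{−iπ(2r+1)k/2^s}. -/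

import Mathlib

/-- The `2^s × 2^s` matrix `A` with `A_{k,k−1} = 1` for `1 ≤ k ≤ 2^s−1`,
`A_{0,2^s−1} = −1`, and all other entries `0`. -/
def matA (s : ℕ) : Matrix (Fin (2 ^ s)) (Fin (2 ^ s)) ℂ :=
  fun k l => if (k : ℕ) = (l : ℕ) + 1 then 1
    else if (k : ℕ) = 0 ∧ (l : ℕ) = 2 ^ s - 1 then -1 else 0

/-- The vector `u₀ = (1, 0, …, 0)ᵀ`. -/
def u0 (s : ℕ) : Fin (2 ^ s) → ℂ := fun k => if k = 0 then 1 else 0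

/-- The eigenvectors `(v_r)_l = 2^{-s/2} (−1)^l e^{−iπ(2r+1)l/2^s}`. -/
noncomputable def vA (s : ℕ) (r : Fin (2 ^ s)) : Fin (2 ^ s) → ℂ :=
  fun l => (((2 : ℝ) ^ (-(s : ℝ) / 2) : ℝ) : ℂ) * (-1) ^ (l : ℕ) *
    Complex.exp (-(Real.pi : ℂ) * Complex.I * (2 * (r : ℕ) + 1) * (l : ℕ) / 2 ^ s)

/-- The unitary matrix `C` whose `r`-th column is the eigenvector `v_r`. -/
noncomputable def matC (s : ℕ) : Matrix (Fin (2 ^ s)) (Fin (2 ^ s)) ℂ :=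
  fun l r => vA s r l


open Complex Real Finset Matrix


lemma geom_aux (N : ℕ) (hN : 0 < N) (d : ℤ) (hd : d.natAbs < N) :
    ∑ l ∈ Finset.range N, Complex.exp (2 * (π:ℂ) * I * d / N) ^ l
      = if d = 0 then (N : ℂ) else 0 := by
  by_cases h : d = 0
  · simp [h]
  · rw [if_neg h]
    have hNz : (N:ℂ) ≠ 0 := Nat.cast_ne_zero.mpr hN.ne'
    have hζ : Complex.exp (2 * (π:ℂ) * I * d / N) ≠ 1 := by
      intro hc
      rw [Complex.exp_eq_one_iff] at hc
      rcases hc with ⟨n, hn⟩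
      have : (d : ℂ) = n * N := by
        have hπ : (π:ℂ) ≠ 0 := Complex.ofReal_ne_zero.mpr Real.pi_ne_zero
        rw [div_eq_iff hNz] at hn
        have h2 : (2*(π:ℂ)*I) * d = (2*(π:ℂ)*I) * (n*N) := by linear_combination hn
        exact mul_left_cancel₀ (by simp [hπ, Complex.I_ne_zero]) h2
      have : d = n * N := by exact_mod_cast this
      rcases lt_trichotomy n 0 with h1 | h1 | h1
      · have : d ≤ -N := by nlinarith [this]
        omega
      · simp [h1] at this; omega
      · have : (N:ℤ) ≤ d := by nlinarith [this]
        omega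
    rw [geom_sum_eq hζ N]
    have : Complex.exp (2 * (π:ℂ) * I * d / N) ^ N = 1 := by
      rw [← Complex.exp_nat_mul]
      have : (N:ℂ) * (2 * (π:ℂ) * I * d / N) = d * (2 * π * I) := by
        field_simp
      rw [this, Complex.exp_int_mul_two_pi_mul_I]
    rw [this]; simp

lemma Npos (s : ℕ) : 0 < 2 ^ s := Nat.pow_pos (by norm_num)

lemma matA_mulVec (s : ℕ) (v : Fin (2 ^ s) → ℂ) (k : Fin (2 ^ s)) :
    (matA s).mulVec v k =
      if (k : ℕ) = 0 then -v ⟨2 ^ s - 1, Nat.sub_lt (Npos s) one_pos⟩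
      else v ⟨(k : ℕ) - 1, lt_of_le_of_lt (Nat.sub_le _ _) k.2⟩ := by
  unfold Matrix.mulVec dotProduct matA
  split_ifs with hk
  · rw [Finset.sum_eq_single (⟨2 ^ s - 1, Nat.sub_lt (Npos s) one_pos⟩ : Fin (2 ^ s))]
    · have h1 : ¬ ((k:ℕ) = (2 ^ s - 1) + 1) := by have := Npos s; omega
      simp [h1, hk]
    · intro l _ hl
      have h1 : ¬ ((k:ℕ) = (l:ℕ) + 1) := by omega
      have h2 : ¬ ((l:ℕ) = 2 ^ s - 1) := by
        intro h; apply hl; exact Fin.ext h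
      simp [h1, h2]
    · intro h; exact absurd (Finset.mem_univ _) h
  · rw [Finset.sum_eq_single (⟨(k:ℕ) - 1, lt_of_le_of_lt (Nat.sub_le _ _) k.2⟩ : Fin (2 ^ s))]
    · have h1 : (k:ℕ) = ((k:ℕ) - 1) + 1 := by omega
      show (if (k:ℕ) = ((k:ℕ) - 1) + 1 then (1:ℂ)
          else if (k:ℕ) = 0 ∧ ((k:ℕ) - 1) = 2 ^ s - 1 then -1 else 0) * _ = _
      rw [if_pos h1, one_mul]
    · intro l _ hl
      have h2 : ¬ ((l:ℕ) = (k:ℕ) - 1) := fun h => hl (Fin.ext h)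
      have h1 : ¬ ((k:ℕ) = (l:ℕ) + 1) := by omega
      simp [h1, hk]
    · intro h; exact absurd (Finset.mem_univ _) h

lemma matA_pow_mulVec_u0 (s : ℕ) (m : ℕ) (hm : m < 2 ^ s) :
    (matA s ^ m).mulVec (u0 s) = fun k : Fin (2 ^ s) => if (k : ℕ) = m then (1:ℂ) else 0 := by
  induction m with
  | zero =>
    funext k
    simp [u0, Matrix.one_mulVec]
  | succ m ih =>
    have hm' : m < 2 ^ s := by omega
    funext k
    rw [pow_succ', ← Matrix.mulVec_mulVec, ih hm', matA_mulVec]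
    split_ifs <;> (try simp_all) <;> (try simp only [Fin.ext_iff, Fin.val_zero] at *) <;> omega

lemma mulVec_u0 (s : ℕ) (M : Matrix (Fin (2 ^ s)) (Fin (2 ^ s)) ℂ) (k : Fin (2 ^ s)) :
    M.mulVec (u0 s) k = M k ⟨0, Npos s⟩ := by
  unfold Matrix.mulVec dotProduct u0
  rw [Finset.sum_eq_single (⟨0, Npos s⟩ : Fin (2 ^ s))]
  · have : (⟨0, Npos s⟩ : Fin (2 ^ s)) = 0 := rfl
    simp [this]
  · intro l _ hl
    have : l ≠ 0 := by simpa using hl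
    simp [this]
  · intro h; exact absurd (Finset.mem_univ _) h

lemma mulVec_indicator (s : ℕ) (M : Matrix (Fin (2 ^ s)) (Fin (2 ^ s)) ℂ)
    (m : ℕ) (hm : m < 2 ^ s) (k : Fin (2 ^ s)) :
    M.mulVec (fun j => if (j : ℕ) = m then (1:ℂ) else 0) k = M k ⟨m, hm⟩ := by
  unfold Matrix.mulVec dotProduct
  rw [Finset.sum_eq_single (⟨m, hm⟩ : Fin (2 ^ s))]
  · simp
  · intro l _ hl
    have : ¬ ((l:ℕ) = m) := fun h => hl (Fin.ext h)
    simp [this]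
  · intro h; exact absurd (Finset.mem_univ _) h


noncomputable def lam (s : ℕ) (r : Fin (2 ^ s)) : ℂ :=
  -Complex.exp ((Real.pi : ℂ) * Complex.I * (2 * (r : ℕ) + 1) / 2 ^ s)

lemma exp_odd (n : ℕ) : Complex.exp (-(Real.pi : ℂ) * Complex.I * (2 * n + 1)) = -1 := by
  have h : -(Real.pi:ℂ)*Complex.I*(2*(n:ℕ)+1) = -(((2*n+1 : ℕ) : ℂ) * ((Real.pi:ℂ)*Complex.I)) := by
    push_cast; ring
  rw [h, Complex.exp_neg, Complex.exp_nat_mul, Complex.exp_pi_mul_I,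
    Odd.neg_one_pow ⟨n, by ring⟩]
  norm_num

lemma matA_mulVec_vA (s : ℕ) (hs : 1 ≤ s) (r : Fin (2 ^ s)) :
    (matA s).mulVec (vA s r) = fun k => lam s r * vA s r k := by
  have hN1 : 1 ≤ 2 ^ s := Nat.one_le_two_pow
  have hNz : ((2:ℂ) ^ s) ≠ 0 := pow_ne_zero s two_ne_zero
  funext k
  rw [matA_mulVec]
  split_ifs with hk
  · -- k = 0 case
    show -vA s r ⟨2 ^ s - 1, _⟩ = lam s r * vA s r k
    have hodd : Odd (2 ^ s - 1) :=
      Nat.Even.sub_odd Nat.one_le_two_pow (Nat.even_pow.mpr ⟨even_two, by omega⟩) odd_one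
    unfold vA lam
    simp only [hk]
    have e1 : -(Real.pi:ℂ) * Complex.I * (2*(r:ℕ)+1) * ((2 ^ s - 1 : ℕ) : ℂ) / 2 ^ s
        = (-(Real.pi:ℂ) * Complex.I * (2*(r:ℕ)+1))
          + (Real.pi:ℂ) * Complex.I * (2*(r:ℕ)+1) / 2 ^ s := by
      have : ((2 ^ s - 1 : ℕ) : ℂ) = 2 ^ s - 1 := by
        push_cast [Nat.cast_sub hN1]; norm_num
      rw [this]
      field_simp
      ring
    rw [e1, Complex.exp_add, exp_odd, Odd.neg_one_pow hodd]
    push_cast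
    ring_nf
    rw [Complex.exp_zero]
    ring
  · -- k ≥ 1 case
    show vA s r ⟨(k:ℕ) - 1, _⟩ = lam s r * vA s r k
    unfold vA lam
    have hk1 : 1 ≤ (k:ℕ) := by omega
    have e1 : -(Real.pi:ℂ) * Complex.I * (2*(r:ℕ)+1) * (((k:ℕ) - 1 : ℕ) : ℂ) / 2 ^ s
        = (Real.pi:ℂ) * Complex.I * (2*(r:ℕ)+1) / 2 ^ s
          + -(Real.pi:ℂ) * Complex.I * (2*(r:ℕ)+1) * ((k:ℕ):ℂ) / 2 ^ s := by
      have : (((k:ℕ) - 1 : ℕ) : ℂ) = ((k:ℕ):ℂ) - 1 := by push_cast [Nat.cast_sub hk1]; norm_num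
      rw [this]
      field_simp
      ring
    have e2 : (-1:ℂ) ^ (k:ℕ) = (-1:ℂ) ^ ((k:ℕ) - 1) * (-1) := by
      rw [← pow_succ]; congr 1; omega
    rw [e1, Complex.exp_add, e2]
    ring


lemma c2_mul_N (s : ℕ) : (((2:ℝ) ^ (-(s:ℝ)) : ℝ) : ℂ) * ((2 ^ s : ℕ) : ℂ) = 1 := by
  have : ((2:ℝ) ^ (-(s:ℝ)) : ℝ) * ((2 ^ s : ℕ) : ℝ) = 1 := by
    push_cast
    rw [← Real.rpow_natCast 2 s, ← Real.rpow_add (by norm_num)]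
    norm_num
  exact_mod_cast congrArg (Complex.ofReal) this

lemma c_mul_c (s : ℕ) : (((2:ℝ) ^ (-(s:ℝ)/2) : ℝ) : ℂ) * (((2:ℝ) ^ (-(s:ℝ)/2) : ℝ) : ℂ)
    = (((2:ℝ) ^ (-(s:ℝ)) : ℝ) : ℂ) := by
  rw [← Complex.ofReal_mul, ← Real.rpow_add (by norm_num)]
  norm_num

lemma conj_vA_mul (s : ℕ) (r r' l : Fin (2 ^ s)) :
    (starRingEnd ℂ) (vA s r l) * vA s r' l
      = (((2:ℝ) ^ (-(s:ℝ)) : ℝ) : ℂ) *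
        Complex.exp (2 * (π:ℂ) * I * ((((r:ℕ):ℤ) - ((r':ℕ):ℤ) : ℤ) : ℂ) / 2 ^ s) ^ (l:ℕ) := by
  have hNz : ((2:ℂ) ^ s) ≠ 0 := pow_ne_zero s two_ne_zero
  have hpow : ((-1:ℂ))^(l:ℕ) * (-1:ℂ)^(l:ℕ) = 1 := by
    rw [← pow_add]; exact Even.neg_one_pow ⟨(l:ℕ), rfl⟩
  have hconj : (starRingEnd ℂ) (-(Real.pi : ℂ) * Complex.I * (2 * (r : ℕ) + 1) * (l : ℕ) / 2 ^ s)
      = (Real.pi : ℂ) * Complex.I * (2 * (r : ℕ) + 1) * (l : ℕ) / 2 ^ s := by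
    simp [map_div₀, _root_.map_mul, Complex.conj_I, Complex.conj_ofReal, map_ofNat,
      map_natCast, _root_.map_add, _root_.map_one, map_pow]
  have harg : (Real.pi : ℂ) * Complex.I * (2 * (r : ℕ) + 1) * (l : ℕ) / 2 ^ s
        + -(Real.pi : ℂ) * Complex.I * (2 * (r' : ℕ) + 1) * (l : ℕ) / 2 ^ s
      = (l:ℕ) * (2 * (π:ℂ) * I * ((((r:ℕ):ℤ) - ((r':ℕ):ℤ) : ℤ) : ℂ) / 2 ^ s) := by
    push_cast
    field_simp
    ring
  unfold vA
  rw [← Complex.exp_nat_mul, ← harg, Complex.exp_add]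
  simp only [_root_.map_mul, map_pow, map_neg, _root_.map_one, Complex.conj_ofReal,
    ← Complex.exp_conj, hconj]
  set x := ((-1:ℂ))^(l:ℕ) with hx
  set E1 := Complex.exp ((Real.pi:ℂ) * Complex.I * (2 * (r:ℕ) + 1) * (l:ℕ) / 2 ^ s) with hE1
  set E2 := Complex.exp (-(Real.pi:ℂ) * Complex.I * (2 * (r':ℕ) + 1) * (l:ℕ) / 2 ^ s) with hE2
  linear_combination ((((2:ℝ)^(-(s:ℝ)/2):ℝ):ℂ) * (((2:ℝ)^(-(s:ℝ)/2):ℝ):ℂ) * E1 * E2) * hpow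
    + (E1 * E2) * (c_mul_c s)

lemma gram_vA (s : ℕ) (r r' : Fin (2 ^ s)) :
    ∑ l, (starRingEnd ℂ) (vA s r l) * vA s r' l = if r = r' then 1 else 0 := by
  simp only [conj_vA_mul]
  rw [← Finset.mul_sum]
  rw [Fin.sum_univ_eq_sum_range
    (fun l => Complex.exp (2 * (π:ℂ) * I * ((((r:ℕ):ℤ) - ((r':ℕ):ℤ) : ℤ) : ℂ) / 2 ^ s) ^ l)]
  rw [show ((2:ℂ) ^ s) = ((2^s : ℕ) : ℂ) by push_cast; ring]
  rw [geom_aux (2^s) (Npos s) _ (by omega)]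
  split_ifs with h1 h2 h2
  · exact c2_mul_N s
  · exact absurd (Fin.ext (by omega)) h2
  · exact absurd (by subst h2; simp) h1
  · ring


lemma starC_mul_C (s : ℕ) : star (matC s) * matC s = 1 := by
  ext r r'
  rw [Matrix.mul_apply, Matrix.one_apply]
  simp only [Matrix.star_apply]
  have := gram_vA s r r'
  simpa [matC] using this

lemma matC_mem (s : ℕ) : matC s ∈ Matrix.unitaryGroup (Fin (2 ^ s)) ℂ :=
  Matrix.mem_unitaryGroup_iff'.mpr (starC_mul_C s)

lemma C_mul_starC (s : ℕ) : matC s * star (matC s) = 1 :=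
  mul_eq_one_comm.mp (starC_mul_C s)

lemma matC_inv (s : ℕ) : (matC s)⁻¹ = star (matC s) :=
  Matrix.inv_eq_left_inv (starC_mul_C s)

lemma AC_eq_CD (s : ℕ) (hs : 1 ≤ s) :
    matA s * matC s = matC s * Matrix.diagonal (lam s) := by
  ext k r
  have h := congrFun (matA_mulVec_vA s hs r) k
  rw [Matrix.mul_apply, Matrix.mul_diagonal]
  simpa [Matrix.mulVec, dotProduct, matC, mul_comm] using h

lemma A_eq (s : ℕ) (hs : 1 ≤ s) :
    matA s = matC s * Matrix.diagonal (lam s) * star (matC s) := by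
  calc matA s = matA s * (matC s * star (matC s)) := by rw [C_mul_starC, mul_one]
    _ = (matA s * matC s) * star (matC s) := by rw [mul_assoc]
    _ = matC s * Matrix.diagonal (lam s) * star (matC s) := by rw [AC_eq_CD s hs]

lemma conjugate_pow {n : ℕ} (C D : Matrix (Fin n) (Fin n) ℂ)
    (h1 : C * star C = 1) (h2 : star C * C = 1) (m : ℕ) :
    (C * D * star C) ^ m = C * D ^ m * star C := by
  induction m with
  | zero => simp [h1]
  | succ m ih =>
    rw [pow_succ, ih, pow_succ]
    calc C * D ^ m * star C * (C * D * star C)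
        = C * D ^ m * (star C * C) * (D * star C) := by simp only [Matrix.mul_assoc]
      _ = C * D ^ m * (D * star C) := by rw [h2, Matrix.mul_one]
      _ = C * (D ^ m * D) * star C := by simp only [Matrix.mul_assoc]

lemma exp_odd' (n : ℕ) : Complex.exp ((Real.pi : ℂ) * Complex.I * (2 * n + 1)) = -1 := by
  have h : (Real.pi:ℂ)*Complex.I*(2*(n:ℕ)+1) = ((2*n+1 : ℕ) : ℂ) * ((Real.pi:ℂ)*Complex.I) := by
    push_cast; ring
  rw [h, Complex.exp_nat_mul, Complex.exp_pi_mul_I, Odd.neg_one_pow ⟨n, by ring⟩]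

lemma lam_pow (s : ℕ) (hs : 1 ≤ s) (r : Fin (2 ^ s)) : lam s r ^ (2 ^ s) = -1 := by
  have hNz : ((2:ℂ) ^ s) ≠ 0 := pow_ne_zero s two_ne_zero
  have heven : Even (2 ^ s) := Nat.even_pow.mpr ⟨even_two, by omega⟩
  unfold lam
  rw [neg_pow, Even.neg_one_pow heven, one_mul, ← Complex.exp_nat_mul]
  have : ((2 ^ s : ℕ) : ℂ) * ((Real.pi : ℂ) * Complex.I * (2 * (r:ℕ) + 1) / 2 ^ s)
      = (Real.pi : ℂ) * Complex.I * (2 * (r:ℕ) + 1) := by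
    push_cast
    field_simp
  rw [this, exp_odd']

lemma matA_pow_N (s : ℕ) (hs : 1 ≤ s) : matA s ^ (2 ^ s) = -1 := by
  rw [A_eq s hs, conjugate_pow _ _ (C_mul_starC s) (starC_mul_C s), Matrix.diagonal_pow]
  have h : (lam s ^ (2 ^ s) : Fin (2 ^ s) → ℂ) = fun _ : Fin (2 ^ s) => (-1:ℂ) :=
    funext fun i => by rw [Pi.pow_apply]; exact lam_pow s hs i
  have hd1 : Matrix.diagonal (fun _ : Fin (2 ^ s) => (-1:ℂ)) = -1 := by
    ext i j
    by_cases hij : i = j <;> simp [Matrix.diagonal_apply, hij, Matrix.one_apply]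
  rw [h, hd1, mul_neg, mul_one, neg_mul, C_mul_starC]

lemma lam_inj (s : ℕ) (r r' : Fin (2 ^ s)) (h : lam s r = lam s r') : r = r' := by
  unfold lam at h
  have h' := neg_inj.mp h
  rw [Complex.exp_eq_exp_iff_exists_int] at h'
  obtain ⟨n, hn⟩ := h'
  have hNz : ((2:ℂ) ^ s) ≠ 0 := pow_ne_zero s two_ne_zero
  have hπI : (Real.pi:ℂ) * Complex.I ≠ 0 :=
    mul_ne_zero (Complex.ofReal_ne_zero.mpr Real.pi_ne_zero) Complex.I_ne_zero
  have key : ((Real.pi:ℂ)*Complex.I) * (2*(r:ℕ)+1)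
      = ((Real.pi:ℂ)*Complex.I) * ((2*(r':ℕ)+1) + n*2*2^s) := by
    field_simp at hn
    linear_combination ((Real.pi:ℂ)*Complex.I) * hn
  have key2 := mul_left_cancel₀ hπI key
  have key3 : (2*((r:ℕ):ℤ)+1) = (2*((r':ℕ):ℤ)+1) + n*2*2^s := by exact_mod_cast key2
  have hd : ((r:ℕ):ℤ) - ((r':ℕ):ℤ) = n * 2^s := by linarith
  have hbr : ((r:ℕ):ℤ) < 2^s := by exact_mod_cast r.2
  have hbr' : ((r':ℕ):ℤ) < 2^s := by exact_mod_cast r'.2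
  have hr0 : (0:ℤ) ≤ ((r:ℕ):ℤ) := Int.natCast_nonneg _
  have hr0' : (0:ℤ) ≤ ((r':ℕ):ℤ) := Int.natCast_nonneg _
  have hNpos : (0:ℤ) < 2^s := by positivity
  have hn0 : n = 0 := by
    rcases lt_trichotomy n 0 with h1 | h1 | h1
    · exfalso
      have hn1 : n ≤ -1 := by omega
      nlinarith [mul_le_mul_of_nonneg_right hn1 (le_of_lt hNpos)]
    · exact h1
    · exfalso
      have hn1 : 1 ≤ n := by omega
      nlinarith [mul_le_mul_of_nonneg_right hn1 (le_of_lt hNpos)]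
  rw [hn0] at hd
  exact Fin.ext (by omega)


lemma c2_eq_zpow (s : ℕ) : (((2:ℝ) ^ (-(s:ℝ)) : ℝ) : ℂ) = (2:ℂ) ^ (-(s:ℤ)) := by
  rw [_root_.zpow_neg, zpow_natCast]
  rw [Real.rpow_neg (by norm_num), Real.rpow_natCast]
  push_cast
  ring

lemma part3 (s : ℕ) (γ : Fin (2 ^ s) → ℂ) (k : Fin (2 ^ s)) :
    ((matC s * Matrix.diagonal γ * (matC s)⁻¹).mulVec (u0 s)) k =
      (2 : ℂ) ^ (-(s : ℤ)) * (-1) ^ (k : ℕ) *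
        ∑ r : Fin (2 ^ s), γ r *
          Complex.exp (-(Real.pi : ℂ) * Complex.I * (2 * (r : ℕ) + 1) * (k : ℕ) / 2 ^ s) := by
  rw [matC_inv, mulVec_u0, Matrix.mul_apply, Finset.mul_sum]
  apply Finset.sum_congr rfl
  intro j _
  rw [Matrix.mul_diagonal, Matrix.star_apply]
  have h0 : ((⟨0, Npos s⟩ : Fin (2 ^ s)) : ℕ) = 0 := rfl
  have hstar : star (matC s ⟨0, Npos s⟩ j) = (((2:ℝ) ^ (-(s:ℝ)/2) : ℝ) : ℂ) := by
    show (starRingEnd ℂ) (vA s j ⟨0, Npos s⟩) = _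
    unfold vA
    simp [h0, Complex.conj_ofReal]
  rw [hstar]
  show vA s j k * γ j * _ = _
  unfold vA
  rw [show (2:ℂ) ^ (-(s:ℤ)) = (((2:ℝ) ^ (-(s:ℝ)) : ℝ) : ℂ) from (c2_eq_zpow s).symm,
    ← c_mul_c s]
  ring

lemma CdiagC_mul (s : ℕ) (a b : Fin (2 ^ s) → ℂ) :
    (matC s * Matrix.diagonal a * star (matC s)) * (matC s * Matrix.diagonal b * star (matC s))
      = matC s * Matrix.diagonal (fun i => a i * b i) * star (matC s) := by
  have h : Matrix.diagonal a * Matrix.diagonal b = Matrix.diagonal (fun i => a i * b i) := by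
    rw [Matrix.diagonal_mul_diagonal]
  calc (matC s * Matrix.diagonal a * star (matC s)) * (matC s * Matrix.diagonal b * star (matC s))
      = matC s * Matrix.diagonal a * ((star (matC s) * matC s) * (Matrix.diagonal b * star (matC s))) := by
        simp only [Matrix.mul_assoc]
    _ = matC s * Matrix.diagonal a * (Matrix.diagonal b * star (matC s)) := by
        rw [starC_mul_C, Matrix.one_mul]
    _ = matC s * (Matrix.diagonal a * Matrix.diagonal b) * star (matC s) := by
        simp only [Matrix.mul_assoc]
    _ = _ := by rw [h]

lemma star_CdiagC (s : ℕ) (a : Fin (2 ^ s) → ℂ) :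
    star (matC s * Matrix.diagonal a * star (matC s))
      = matC s * Matrix.diagonal (fun i => (starRingEnd ℂ) (a i)) * star (matC s) := by
  rw [Matrix.star_mul, Matrix.star_mul, star_star]
  have h : star (Matrix.diagonal a) = Matrix.diagonal (fun i => (starRingEnd ℂ) (a i)) := by
    show (Matrix.diagonal a)ᴴ = _
    rw [Matrix.diagonal_conjTranspose]
    rfl
  rw [h]
  simp only [Matrix.mul_assoc]

lemma part2_rev (s : ℕ) (hs : 1 ≤ s) (γ : Fin (2 ^ s) → ℂ) (hγ : ∀ r, ‖γ r‖ = 1) :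
    (matC s * Matrix.diagonal γ * (matC s)⁻¹) ∈ Matrix.unitaryGroup (Fin (2 ^ s)) ℂ ∧
      matA s * (matC s * Matrix.diagonal γ * (matC s)⁻¹)
        = (matC s * Matrix.diagonal γ * (matC s)⁻¹) * matA s := by
  rw [matC_inv]
  have hconjmul : ∀ i, (starRingEnd ℂ) (γ i) * γ i = 1 := by
    intro i
    have : γ i * (starRingEnd ℂ) (γ i) = ((‖γ i‖ : ℝ) : ℂ) ^ 2 := by
      rw [Complex.mul_conj]
      norm_cast
      exact (Complex.sq_norm _).symm
    rw [mul_comm] at this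
    rw [this, hγ i]
    norm_num
  constructor
  · rw [Matrix.mem_unitaryGroup_iff']
    rw [star_CdiagC, CdiagC_mul]
    have : (fun i => (starRingEnd ℂ) (γ i) * γ i) = fun _ : Fin (2 ^ s) => (1:ℂ) :=
      funext fun i => hconjmul i
    rw [this, Matrix.diagonal_one, Matrix.mul_one, C_mul_starC]
  · rw [A_eq s hs, CdiagC_mul, CdiagC_mul]
    congr 1
    rw [show (fun i => lam s i * γ i) = fun i => γ i * lam s i from funext fun i => mul_comm _ _]

lemma part2_fwd (s : ℕ) (hs : 1 ≤ s) (B : Matrix (Fin (2 ^ s)) (Fin (2 ^ s)) ℂ)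
    (hBu : B ∈ Matrix.unitaryGroup (Fin (2 ^ s)) ℂ) (hcomm : matA s * B = B * matA s) :
    ∃ γ : Fin (2 ^ s) → ℂ, (∀ r, ‖γ r‖ = 1) ∧
      B = matC s * Matrix.diagonal γ * (matC s)⁻¹ := by
  set Γ := star (matC s) * B * matC s with hΓ
  have h1 : matC s * Matrix.diagonal (lam s) = matA s * matC s := (AC_eq_CD s hs).symm
  have h2 : star (matC s) * matA s = Matrix.diagonal (lam s) * star (matC s) := by
    calc star (matC s) * matA s
        = star (matC s) * (matC s * Matrix.diagonal (lam s) * star (matC s)) := by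
          rw [← A_eq s hs]
      _ = (star (matC s) * matC s) * (Matrix.diagonal (lam s) * star (matC s)) := by
          simp only [Matrix.mul_assoc]
      _ = Matrix.diagonal (lam s) * star (matC s) := by rw [starC_mul_C, Matrix.one_mul]
  have hDcomm : Γ * Matrix.diagonal (lam s) = Matrix.diagonal (lam s) * Γ := by
    calc Γ * Matrix.diagonal (lam s)
        = star (matC s) * B * (matC s * Matrix.diagonal (lam s)) := by
          simp only [hΓ, Matrix.mul_assoc]
      _ = star (matC s) * B * (matA s * matC s) := by rw [h1]
      _ = star (matC s) * (B * matA s) * matC s := by simp only [Matrix.mul_assoc]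
      _ = star (matC s) * (matA s * B) * matC s := by rw [← hcomm]
      _ = (star (matC s) * matA s) * (B * matC s) := by simp only [Matrix.mul_assoc]
      _ = (Matrix.diagonal (lam s) * star (matC s)) * (B * matC s) := by rw [h2]
      _ = Matrix.diagonal (lam s) * Γ := by simp only [hΓ, Matrix.mul_assoc]
  have hdiagonal : Γ = Matrix.diagonal (fun i => Γ i i) := by
    ext i j
    by_cases hij : i = j
    · subst hij; simp [Matrix.diagonal_apply_eq]
    · rw [Matrix.diagonal_apply_ne _ hij]
      have he := congrFun (congrFun hDcomm i) j
      rw [Matrix.mul_diagonal, Matrix.diagonal_mul] at he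
      have hne : lam s j - lam s i ≠ 0 := by
        intro hz
        exact hij (lam_inj s i j (sub_eq_zero.mp hz).symm)
      have : Γ i j * (lam s j - lam s i) = 0 := by linear_combination he
      rcases mul_eq_zero.mp this with h | h
      · exact h
      · exact absurd h hne
  have hsΓ : star Γ * Γ = 1 := by
    have hstarB : star B * B = 1 := Matrix.mem_unitaryGroup_iff'.mp hBu
    have hstarΓ : star Γ = star (matC s) * star B * matC s := by
      rw [hΓ, Matrix.star_mul, Matrix.star_mul, star_star]
      simp only [Matrix.mul_assoc]
    calc star Γ * Γ
        = star (matC s) * star B * ((matC s * star (matC s)) * (B * matC s)) := by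
          rw [hstarΓ, hΓ]; simp only [Matrix.mul_assoc]
      _ = star (matC s) * (star B * B) * matC s := by
          rw [C_mul_starC, Matrix.one_mul]; simp only [Matrix.mul_assoc]
      _ = star (matC s) * matC s := by rw [hstarB, Matrix.mul_one]
      _ = 1 := starC_mul_C s
  refine ⟨fun i => Γ i i, ?_, ?_⟩
  · intro i
    have h := congrFun (congrFun hsΓ i) i
    rw [Matrix.mul_apply, Matrix.one_apply_eq] at h
    rw [Finset.sum_eq_single i] at h
    · rw [Matrix.star_apply] at h
      have habs := congrArg (‖·‖) h
      rw [norm_mul, norm_one] at habs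
      have : ‖star (Γ i i)‖ = ‖Γ i i‖ := norm_star _
      rw [this] at habs
      show ‖Γ i i‖ = 1
      nlinarith [norm_nonneg (Γ i i)]
    · intro l _ hl
      rw [hdiagonal] at hsΓ ⊢
      rw [Matrix.diagonal_apply_ne _ hl, mul_zero]
    · intro hmem; exact absurd (Finset.mem_univ _) hmem
  · rw [matC_inv]
    calc B = (matC s * star (matC s)) * B * (matC s * star (matC s)) := by
          rw [C_mul_starC]; rw [Matrix.one_mul, Matrix.mul_one]
      _ = matC s * Γ * star (matC s) := by rw [hΓ]; simp only [Matrix.mul_assoc]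
      _ = matC s * Matrix.diagonal (fun i => Γ i i) * star (matC s) := by rw [← hdiagonal]


lemma part1_fwd (s : ℕ) (hs : 1 ≤ s) (u : Fin (2 ^ s) → ℂ)
    (hyp : ∀ r r' : Fin (2 ^ s),
      ∑ l, ((matA s ^ (r : ℕ)).mulVec u) l *
          (starRingEnd ℂ) (((matA s ^ (r' : ℕ)).mulVec u) l) =
        if r = r' then 1 else 0) :
    ∃ B : Matrix (Fin (2 ^ s)) (Fin (2 ^ s)) ℂ,
      B ∈ Matrix.unitaryGroup (Fin (2 ^ s)) ℂ ∧
      matA s * B = B * matA s ∧ u = B.mulVec (u0 s) := by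
  set B : Matrix (Fin (2 ^ s)) (Fin (2 ^ s)) ℂ :=
    Matrix.of (fun k r => ((matA s ^ (r : ℕ)).mulVec u) k) with hB
  refine ⟨B, ?_, ?_, ?_⟩
  · rw [Matrix.mem_unitaryGroup_iff']
    ext r r'
    rw [Matrix.mul_apply, Matrix.one_apply]
    have key := hyp r' r
    calc ∑ l, star B r l * B l r'
        = ∑ l, ((matA s ^ (r' : ℕ)).mulVec u) l *
            (starRingEnd ℂ) (((matA s ^ (r : ℕ)).mulVec u) l) := by
          apply Finset.sum_congr rfl
          intro l _
          rw [Matrix.star_apply, hB]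
          simp only [Matrix.of_apply]
          rw [mul_comm]
          rfl
      _ = if r' = r then 1 else 0 := key
      _ = if r = r' then 1 else 0 := by by_cases h : r = r' <;> simp [h, Ne.symm]
  · ext k r
    have hL : (matA s * B) k r = ((matA s ^ ((r:ℕ) + 1)).mulVec u) k := by
      rw [pow_succ', ← Matrix.mulVec_mulVec]
      simp only [Matrix.mul_apply, Matrix.mulVec, dotProduct, hB, Matrix.of_apply]
    rw [hL, Matrix.mul_apply]
    by_cases hr : (r : ℕ) = 2 ^ s - 1
    · have hlast : (r:ℕ) + 1 = 2 ^ s := by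
        have := r.2; omega
      rw [hlast, matA_pow_N s hs]
      rw [Finset.sum_eq_single (⟨0, Npos s⟩ : Fin (2 ^ s))]
      · have hA : matA s ⟨0, Npos s⟩ r = -1 := by
          unfold matA
          have h1 : ¬ ((⟨0, Npos s⟩ : Fin (2 ^ s)) : ℕ) = (r:ℕ) + 1 := by
            simp
          rw [if_neg h1, if_pos ⟨rfl, hr⟩]
        rw [hA, Matrix.neg_mulVec, Matrix.one_mulVec]
        have hB0 : B k ⟨0, Npos s⟩ = u k := by
          simp only [hB, Matrix.of_apply]
          norm_num
        rw [hB0]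
        simp
      · intro j _ hj
        have hA : matA s j r = 0 := by
          unfold matA
          have h1 : ¬ ((j : ℕ) = (r:ℕ) + 1) := by have := j.2; omega
          have h2 : ¬ ((j:ℕ) = 0 ∧ (r:ℕ) = 2 ^ s - 1) := by
            rintro ⟨hj0, -⟩
            exact hj (Fin.ext hj0)
          rw [if_neg h1, if_neg h2]
        rw [hA, mul_zero]
      · intro hmem; exact absurd (Finset.mem_univ _) hmem
    · have hrlt : (r:ℕ) + 1 < 2 ^ s := by have := r.2; omega
      rw [Finset.sum_eq_single (⟨(r:ℕ) + 1, hrlt⟩ : Fin (2 ^ s))]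
      · have hA : matA s ⟨(r:ℕ) + 1, hrlt⟩ r = 1 := by
          unfold matA
          rw [if_pos rfl]
        rw [hA, mul_one]
        simp only [hB, Matrix.of_apply]
      · intro j _ hj
        have hA : matA s j r = 0 := by
          unfold matA
          have h1 : ¬ ((j : ℕ) = (r:ℕ) + 1) := fun h => hj (Fin.ext h)
          have h2 : ¬ ((j:ℕ) = 0 ∧ (r:ℕ) = 2 ^ s - 1) := by
            rintro ⟨-, hc⟩; exact hr hc
          rw [if_neg h1, if_neg h2]
        rw [hA, mul_zero]
      · intro hmem; exact absurd (Finset.mem_univ _) hmem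
  · funext k
    rw [mulVec_u0]
    simp only [hB, Matrix.of_apply]
    norm_num

lemma part1_rev (s : ℕ) (B : Matrix (Fin (2 ^ s)) (Fin (2 ^ s)) ℂ)
    (hBu : B ∈ Matrix.unitaryGroup (Fin (2 ^ s)) ℂ) (hcomm : matA s * B = B * matA s)
    (r r' : Fin (2 ^ s)) :
    ∑ l, ((matA s ^ (r : ℕ)).mulVec (B.mulVec (u0 s))) l *
        (starRingEnd ℂ) (((matA s ^ (r' : ℕ)).mulVec (B.mulVec (u0 s))) l) =
      if r = r' then 1 else 0 := by
  have hstar : star B * B = 1 := Matrix.mem_unitaryGroup_iff'.mp hBu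
  have hc : Commute (matA s) B := hcomm
  have key : ∀ ρ : Fin (2 ^ s),
      (matA s ^ (ρ : ℕ)).mulVec (B.mulVec (u0 s)) = fun l => B l ρ := by
    intro ρ
    funext l
    rw [Matrix.mulVec_mulVec, (hc.pow_left (ρ:ℕ)), ← Matrix.mulVec_mulVec,
      matA_pow_mulVec_u0 s _ ρ.2, mulVec_indicator s B _ ρ.2]
  rw [key r, key r']
  have h := congrFun (congrFun hstar r') r
  rw [Matrix.mul_apply, Matrix.one_apply] at h
  calc ∑ l, B l r * (starRingEnd ℂ) (B l r')
      = ∑ l, star B r' l * B l r := by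
        apply Finset.sum_congr rfl
        intro l _
        rw [Matrix.star_apply, mul_comm]
        rfl
    _ = if r' = r then 1 else 0 := h
    _ = if r = r' then 1 else 0 := by by_cases hrr : r = r' <;> simp [hrr, Ne.symm]

theorem orthonormal_orbit_characterization (s : ℕ) (hs : 1 ≤ s) :
    (∀ u : Fin (2 ^ s) → ℂ,
      (∀ r r' : Fin (2 ^ s),
        ∑ l, ((matA s ^ (r : ℕ)).mulVec u) l *
            (starRingEnd ℂ) (((matA s ^ (r' : ℕ)).mulVec u) l) =
          if r = r' then 1 else 0) ↔
      ∃ B : Matrix (Fin (2 ^ s)) (Fin (2 ^ s)) ℂ,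
        B ∈ Matrix.unitaryGroup (Fin (2 ^ s)) ℂ ∧
        matA s * B = B * matA s ∧ u = B.mulVec (u0 s)) ∧
    (∀ B : Matrix (Fin (2 ^ s)) (Fin (2 ^ s)) ℂ,
      (B ∈ Matrix.unitaryGroup (Fin (2 ^ s)) ℂ ∧ matA s * B = B * matA s) ↔
      ∃ γ : Fin (2 ^ s) → ℂ, (∀ r, ‖γ r‖ = 1) ∧
        B = matC s * Matrix.diagonal γ * (matC s)⁻¹) ∧
    (∀ γ : Fin (2 ^ s) → ℂ, (∀ r, ‖γ r‖ = 1) →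
      ∀ k : Fin (2 ^ s),
        ((matC s * Matrix.diagonal γ * (matC s)⁻¹).mulVec (u0 s)) k =
          (2 : ℂ) ^ (-(s : ℤ)) * (-1) ^ (k : ℕ) *
            ∑ r : Fin (2 ^ s), γ r *
              Complex.exp (-(Real.pi : ℂ) * Complex.I * (2 * (r : ℕ) + 1) * (k : ℕ) / 2 ^ s)) := by
  refine ⟨?_, ?_, ?_⟩
  · intro u
    constructor
    · exact part1_fwd s hs u
    · rintro ⟨B, hBu, hcomm, rfl⟩
      exact part1_rev s B hBu hcomm
  · intro B
    constructor
    · rintro ⟨hBu, hcomm⟩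
      exact part2_fwd s hs B hBu hcomm
    · rintro ⟨γ, hγ, rfl⟩
      exact part2_rev s hs γ hγ
  · intro γ _ k
    exact part3 s γ k
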